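/- Let ε > 0, let ψ : [0, ε] → ℝ be continuous, and let n be a positive integer. Then for every integer k with 1 ≤ k ≤ n and every t ∈ (0, ε), the function t ↦ ∫₀ᵗ ψ(τ) · (t−τ)^{n+1}/t dτ is k times differentiable at t and its k-th derivative there equals ∫₀ᵗ ψ(τ) · (∂_t)^k( (t−τ)^{n+1}/t ) dτ, where (∂_t)^k( (t−τ)^{n+1}/t ) is the k-th derivative in t of t ↦ (t−τ)^{n+1}/t for fixed τ. -/

import Mathlib

open MeasureTheory Filter Real
open scoped Topology RealInnerProductSpace

noncomputable section

abbrev E3 := EuclideanSpace ℝ (Fin 3)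
abbrev E2 := EuclideanSpace ℝ (Fin 2)

def vec3 (a b c : ℝ) : E3 := (WithLp.equiv 2 (Fin 3 → ℝ)).symm ![a, b, c]
def vec2 (a b : ℝ) : E2 := (WithLp.equiv 2 (Fin 2 → ℝ)).symm ![a, b]

/-- The great circle of the unit sphere in `ℝ³` orthogonal to `θ`. -/
def circleSet (θ : E3) : Set E3 := {α | α ∈ Metric.sphere (0:E3) 1 ∧ ⟪θ, α⟫ = 0}

/-- The Minkowski–Funk transform: integral over the great circle orthogonal to `θ`
with respect to one-dimensional Hausdorff (arc-length) measure. -/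
def funkT (φ : E3 → ℝ) (θ : E3) : ℝ := ∫ α in circleSet θ, φ α ∂μH[1]

/-- The spherical Radon transform with centers on the sphere of radius `r`. -/
def sphRadon (r : ℝ) (f : E3 → ℝ) (α : E3) (t : ℝ) : ℝ :=
  ∫ β in Metric.sphere (0:E3) 1, f (r • α + t • β) ∂μH[2]

/-- The transform `R_P` arising in PAT with circular integrating detectors. -/
def RP (r : ℝ) (f : E3 → ℝ) (θ : E3) (t : ℝ) : ℝ :=
  ∫ α in circleSet θ, (∫ β in Metric.sphere (0:E3) 1, f (r • α + t • β) ∂μH[2]) ∂μH[1]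

/-- Rotation of a vector in `ℝ²` by `π/2`. -/
def perp (ω : E2) : E2 := vec2 (-(ω 1)) (ω 0)

/-- The two-dimensional Radon transform. -/
def radon2 (Φ : E2 → ℝ) (ω : E2) (s : ℝ) : ℝ := ∫ ν : ℝ, Φ (s • ω + ν • perp ω)

/-- Principal value of `∫ F`, where the singular set is removed via `{s | ε < |e s|}`:
the limit as `ε → 0⁺` of the integrals over `{s | |e s| > ε}`. -/
def pv (F : ℝ → ℝ) (e : ℝ → ℝ) : ℝ :=
  limUnder (𝓝[>] (0:ℝ)) (fun ε => ∫ s in {s | ε < |e s|}, F s)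

/-- The Hilbert transform `Hu(s) = (1/π) p.v. ∫ u(s')/(s-s') ds'`. -/
def hilbertT (u : ℝ → ℝ) (s : ℝ) : ℝ :=
  (1/π) * pv (fun s' => u s' / (s - s')) (fun s' => s - s')

/-- The backprojection operator `R#u(x) = ∫_{S¹} u(ω, x·ω) dS(ω)`. -/
def backproj (u : E2 → ℝ → ℝ) (x : E2) : ℝ :=
  ∫ ω in Metric.sphere (0:E2) 1, u ω ⟪x, ω⟫ ∂μH[1]

namespace S10
open Finset fwdDiff

/-- The falling-factorial-type polynomial `x ↦ (x-1)(x-2)⋯(x-k)`. -/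
noncomputable def q (k : ℕ) (x : ℝ) : ℝ := ∏ j ∈ Finset.range k, (x - 1 - (j : ℝ))

lemma q_zero (x : ℝ) : q 0 x = 1 := by simp [q]

lemma q_succ (k : ℕ) (x : ℝ) : q (k + 1) x = q k x * (x - 1 - (k : ℝ)) :=
  Finset.prod_range_succ _ _

lemma fwdDiff_q (k : ℕ) : Δ_[(1:ℝ)] (q (k + 1)) = fun x => ((k : ℝ) + 1) * q k x := by
  funext x
  have h1 : q (k + 1) (x + 1) = q k x * x := by
    rw [q, Finset.prod_range_succ', q]
    congr 1
    · refine Finset.prod_congr rfl fun j _ => ?_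
      push_cast; ring
    · push_cast; ring
  rw [fwdDiff, h1, q_succ]; ring

lemma q_iter_zero (k : ℕ) : (Δ_[(1:ℝ)])^[k + 1] (q k) = fun _ => 0 := by
  induction k with
  | zero =>
    funext x; simp [fwdDiff, q]
  | succ k ih =>
    have : (Δ_[(1:ℝ)])^[k + 2] (q (k + 1)) = (Δ_[(1:ℝ)])^[k + 1] (Δ_[(1:ℝ)] (q (k + 1))) := by
      rw [← Function.iterate_succ_apply]
    rw [this, fwdDiff_q]
    have h2 : (fun x => ((k : ℝ) + 1) * q k x) = ((k : ℝ) + 1) • q k := by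
      funext x; simp
    rw [h2, fwdDiff_iter_const_smul, ih]
    funext x; simp

lemma vanish (n k : ℕ) (hk : k ≤ n) :
    ∑ i ∈ Finset.range (n + 2),
      ((-1:ℝ) ^ (i + (n + 1)) * ((n + 1).choose i : ℝ)) * q k (i : ℝ) = 0 := by
  have h0 : (Δ_[(1:ℝ)])^[n + 1] (q k) 0 = 0 := by
    obtain ⟨m, hm⟩ : ∃ m, n + 1 = m + (k + 1) := ⟨n - k, by omega⟩
    rw [hm, Function.iterate_add_apply, q_iter_zero]
    have hz : Δ_[(1:ℝ)] (fun _ : ℝ => (0:ℝ)) = fun _ : ℝ => (0:ℝ) := by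
      funext x; simp [fwdDiff]
    rw [Function.iterate_fixed hz m]
  rw [fwdDiff_iter_eq_sum_shift] at h0
  rw [show n + 1 + 1 = n + 2 from rfl] at h0
  rw [← h0]
  refine Finset.sum_congr rfl fun i hi => ?_
  have hi' : i ≤ n + 1 := by simpa [Nat.lt_succ_iff] using Finset.mem_range.mp hi
  have hsign : ((-1:ℝ) ^ (i + (n + 1))) = (-1:ℝ) ^ (n + 1 - i) := by
    have : i + (n + 1) = (n + 1 - i) + 2 * i := by omega
    rw [this, pow_add, pow_mul]; simp
  have harg : (0 : ℝ) + i • (1:ℝ) = (i : ℝ) := by simp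
  rw [zsmul_eq_mul, harg, hsign]
  push_cast
  ring

/-- Moments of `ψ`. -/
noncomputable def Mm (ψ : ℝ → ℝ) (j : ℕ) (u : ℝ) : ℝ := ∫ τ in (0:ℝ)..u, ψ τ * τ ^ j

/-- Closed form for the `k`-th derivative of the parametric integral. -/
noncomputable def Phi (ψ : ℝ → ℝ) (n k : ℕ) (u : ℝ) : ℝ :=
  ∑ i ∈ Finset.range (n + 2),
    ((-1:ℝ) ^ (i + (n + 1)) * ((n + 1).choose i : ℝ)) * q k (i : ℝ)
      * u ^ ((i : ℤ) - 1 - (k : ℤ)) * Mm ψ (n + 1 - i) u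

/-- Closed form for the `k`-th derivative of the kernel. -/
noncomputable def Qf (n k : ℕ) (τ u : ℝ) : ℝ :=
  ∑ i ∈ Finset.range (n + 2),
    ((-1:ℝ) ^ (i + (n + 1)) * ((n + 1).choose i : ℝ)) * q k (i : ℝ)
      * u ^ ((i : ℤ) - 1 - (k : ℤ)) * τ ^ (n + 1 - i)

lemma expand (n : ℕ) (τ u : ℝ) (hu : u ≠ 0) :
    (u - τ) ^ (n + 1) / u = Qf n 0 τ u := by
  rw [Qf, sub_pow, Finset.sum_div]
  refine Finset.sum_congr rfl fun i hi => ?_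
  have hz : u ^ ((i : ℤ) - 1 - ((0:ℕ) : ℤ)) = u ^ i * u⁻¹ := by
    rw [show (i : ℤ) - 1 - ((0:ℕ) : ℤ) = (i : ℤ) + (-1) by push_cast; ring,
      zpow_add₀ hu, zpow_natCast, zpow_neg_one]
  rw [hz, q_zero, div_eq_mul_inv]
  ring

lemma hM_deriv {ε : ℝ} {ψ : ℝ → ℝ} (hψ : ContinuousOn ψ (Set.Icc 0 ε)) (j : ℕ)
    {t : ℝ} (ht : t ∈ Set.Ioo (0:ℝ) ε) :
    HasDerivAt (Mm ψ j) (ψ t * t ^ j) t := by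
  have hsub : Set.Icc (0:ℝ) t ⊆ Set.Icc 0 ε := Set.Icc_subset_Icc le_rfl ht.2.le
  have hcont : ContinuousOn (fun τ : ℝ => ψ τ * τ ^ j) (Set.Icc 0 ε) :=
    hψ.mul (continuous_pow j).continuousOn
  apply intervalIntegral.integral_hasDerivAt_right
  · exact (hcont.mono (by rw [Set.uIcc_of_le ht.1.le]; exact hsub)).intervalIntegrable
  · exact (hcont.mono Set.Ioo_subset_Icc_self).stronglyMeasurableAtFilter isOpen_Ioo t ht
  · exact (hψ.continuousAt (Icc_mem_nhds ht.1 ht.2)).mul (continuous_pow j).continuousAt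

lemma hQd (n k : ℕ) (τ t : ℝ) (ht : t ≠ 0) :
    HasDerivAt (fun u => Qf n k τ u) (Qf n (k + 1) τ t) t := by
  have h : HasDerivAt (fun u => Qf n k τ u)
      (∑ i ∈ Finset.range (n + 2),
        ((-1:ℝ) ^ (i + (n + 1)) * ((n + 1).choose i : ℝ)) * q k (i : ℝ)
          * ((((i : ℤ) - 1 - (k : ℤ) : ℤ) : ℝ) * t ^ ((i : ℤ) - 1 - (k : ℤ) - 1))
          * τ ^ (n + 1 - i)) t := by
    unfold Qf
    exact HasDerivAt.fun_sum fun (i : ℕ) _ =>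
      ((hasDerivAt_zpow ((i : ℤ) - 1 - (k : ℤ)) t (Or.inl ht)).const_mul
        ((-1:ℝ) ^ (i + (n + 1)) * ((n + 1).choose i : ℝ) * q k (i : ℝ))).mul_const _
  convert h using 1
  rw [Qf]
  refine Finset.sum_congr rfl fun i _ => ?_
  have he : (i : ℤ) - 1 - ((k + 1 : ℕ) : ℤ) = (i : ℤ) - 1 - (k : ℤ) - 1 := by push_cast; ring
  rw [q_succ, he]
  push_cast
  ring

lemma hPhid {ε : ℝ} {ψ : ℝ → ℝ} (hψ : ContinuousOn ψ (Set.Icc 0 ε)) (n k : ℕ) (hk : k ≤ n)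
    {t : ℝ} (ht : t ∈ Set.Ioo (0:ℝ) ε) :
    HasDerivAt (Phi ψ n k) (Phi ψ n (k + 1) t) t := by
  have ht0 : t ≠ 0 := ne_of_gt ht.1
  have h : HasDerivAt (Phi ψ n k)
      (∑ i ∈ Finset.range (n + 2),
        (((-1:ℝ) ^ (i + (n + 1)) * ((n + 1).choose i : ℝ)) * q k (i : ℝ)
            * ((((i : ℤ) - 1 - (k : ℤ) : ℤ) : ℝ) * t ^ ((i : ℤ) - 1 - (k : ℤ) - 1))
            * Mm ψ (n + 1 - i) t
          + ((-1:ℝ) ^ (i + (n + 1)) * ((n + 1).choose i : ℝ)) * q k (i : ℝ)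
            * t ^ ((i : ℤ) - 1 - (k : ℤ)) * (ψ t * t ^ (n + 1 - i)))) t := by
    unfold Phi
    exact HasDerivAt.fun_sum fun (i : ℕ) _ =>
      ((hasDerivAt_zpow ((i : ℤ) - 1 - (k : ℤ)) t (Or.inl ht0)).const_mul
        ((-1:ℝ) ^ (i + (n + 1)) * ((n + 1).choose i : ℝ) * q k (i : ℝ))).mul
        (hM_deriv hψ (n + 1 - i) ht)
  convert h using 1
  rw [Finset.sum_add_distrib]
  have h2 : (∑ i ∈ Finset.range (n + 2),
      ((-1:ℝ) ^ (i + (n + 1)) * ((n + 1).choose i : ℝ)) * q k (i : ℝ)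
        * t ^ ((i : ℤ) - 1 - (k : ℤ)) * (ψ t * t ^ (n + 1 - i)))
      = ψ t * t ^ ((n : ℤ) - (k : ℤ)) *
        ∑ i ∈ Finset.range (n + 2),
          ((-1:ℝ) ^ (i + (n + 1)) * ((n + 1).choose i : ℝ)) * q k (i : ℝ) := by
    rw [Finset.mul_sum]
    refine Finset.sum_congr rfl fun i hi => ?_
    have hi' : i ≤ n + 1 := by have := Finset.mem_range.mp hi; omega
    have hpow : t ^ ((i : ℤ) - 1 - (k : ℤ)) * t ^ (n + 1 - i) = t ^ ((n : ℤ) - (k : ℤ)) := by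
      rw [← zpow_natCast t (n + 1 - i), ← zpow_add₀ ht0]
      congr 1
      omega
    calc ((-1:ℝ) ^ (i + (n + 1)) * ((n + 1).choose i : ℝ)) * q k (i : ℝ)
          * t ^ ((i : ℤ) - 1 - (k : ℤ)) * (ψ t * t ^ (n + 1 - i))
        = (((-1:ℝ) ^ (i + (n + 1)) * ((n + 1).choose i : ℝ)) * q k (i : ℝ)) * ψ t
            * (t ^ ((i : ℤ) - 1 - (k : ℤ)) * t ^ (n + 1 - i)) := by ring
      _ = _ := by rw [hpow]; ring
  rw [h2, vanish n k hk, mul_zero, add_zero, Phi]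
  refine Finset.sum_congr rfl fun i _ => ?_
  have he : (i : ℤ) - 1 - ((k + 1 : ℕ) : ℤ) = (i : ℤ) - 1 - (k : ℤ) - 1 := by push_cast; ring
  rw [q_succ, he]
  push_cast
  ring

lemma hPhi0 {ε : ℝ} {ψ : ℝ → ℝ} (hψ : ContinuousOn ψ (Set.Icc 0 ε)) (n : ℕ)
    {u : ℝ} (hu : u ∈ Set.Ioo (0:ℝ) ε) :
    (∫ τ in (0:ℝ)..u, ψ τ * ((u - τ) ^ (n + 1) / u)) = Phi ψ n 0 u := by
  have hu0 : u ≠ 0 := ne_of_gt hu.1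
  have hsub : Set.uIcc (0:ℝ) u ⊆ Set.Icc 0 ε := by
    rw [Set.uIcc_of_le hu.1.le]; exact Set.Icc_subset_Icc le_rfl hu.2.le
  have hint : ∀ i ∈ Finset.range (n + 2), IntervalIntegrable
      (fun τ : ℝ => ((-1:ℝ) ^ (i + (n + 1)) * ((n + 1).choose i : ℝ)) * q 0 (i : ℝ)
        * u ^ ((i : ℤ) - 1 - ((0:ℕ) : ℤ)) * (ψ τ * τ ^ (n + 1 - i)))
      MeasureTheory.volume 0 u := by
    intro i _
    exact (continuousOn_const.mul
      ((hψ.mono hsub).mul (continuous_pow _).continuousOn)).intervalIntegrable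
  have h1 : (∫ τ in (0:ℝ)..u, ψ τ * ((u - τ) ^ (n + 1) / u))
      = ∫ τ in (0:ℝ)..u, ∑ i ∈ Finset.range (n + 2),
          ((-1:ℝ) ^ (i + (n + 1)) * ((n + 1).choose i : ℝ)) * q 0 (i : ℝ)
            * u ^ ((i : ℤ) - 1 - ((0:ℕ) : ℤ)) * (ψ τ * τ ^ (n + 1 - i)) := by
    refine intervalIntegral.integral_congr fun τ _ => ?_
    rw [expand n τ u hu0, Qf, Finset.mul_sum]
    exact Finset.sum_congr rfl fun i _ => by ring
  rw [h1, intervalIntegral.integral_finset_sum hint, Phi]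
  refine Finset.sum_congr rfl fun i _ => ?_
  rw [intervalIntegral.integral_const_mul]
  rfl

lemma iterQ (n k : ℕ) (τ : ℝ) : ∀ t : ℝ, t ≠ 0 →
    iteratedDeriv k (fun u => (u - τ) ^ (n + 1) / u) t = Qf n k τ t := by
  induction k with
  | zero => intro t ht; rw [iteratedDeriv_zero]; exact expand n τ t ht
  | succ k ih =>
    intro t ht
    rw [iteratedDeriv_succ]
    have hev : iteratedDeriv k (fun u => (u - τ) ^ (n + 1) / u)
        =ᶠ[nhds t] fun u => Qf n k τ u := by
      filter_upwards [isOpen_compl_singleton.mem_nhds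
        (Set.mem_compl_singleton_iff.mpr ht)] with u hu using ih u (by simpa using hu)
    rw [hev.deriv_eq, (hQd n k τ t ht).deriv]

lemma iterF {ε : ℝ} {ψ : ℝ → ℝ} (hψ : ContinuousOn ψ (Set.Icc 0 ε)) (n : ℕ) :
    ∀ k, k ≤ n → ∀ t ∈ Set.Ioo (0:ℝ) ε,
      iteratedDeriv k (fun u : ℝ => ∫ τ in (0:ℝ)..u, ψ τ * ((u - τ) ^ (n + 1) / u)) t
        = Phi ψ n k t := by
  intro k
  induction k with
  | zero => intro _ t ht; rw [iteratedDeriv_zero]; exact hPhi0 hψ n ht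
  | succ k ih =>
    intro hk t ht
    rw [iteratedDeriv_succ]
    have hev : iteratedDeriv k (fun u : ℝ => ∫ τ in (0:ℝ)..u, ψ τ * ((u - τ) ^ (n + 1) / u))
        =ᶠ[nhds t] Phi ψ n k := by
      filter_upwards [isOpen_Ioo.mem_nhds ht] with u hu using ih (by omega) u hu
    rw [hev.deriv_eq, (hPhid hψ n k (by omega) ht).deriv]

lemma rhsInt {ε : ℝ} {ψ : ℝ → ℝ} (hψ : ContinuousOn ψ (Set.Icc 0 ε)) (n k : ℕ)
    {t : ℝ} (ht : t ∈ Set.Ioo (0:ℝ) ε) :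
    (∫ τ in (0:ℝ)..t, ψ τ * iteratedDeriv k (fun u => (u - τ) ^ (n + 1) / u) t)
      = Phi ψ n k t := by
  have ht0 : t ≠ 0 := ne_of_gt ht.1
  have hsub : Set.uIcc (0:ℝ) t ⊆ Set.Icc 0 ε := by
    rw [Set.uIcc_of_le ht.1.le]; exact Set.Icc_subset_Icc le_rfl ht.2.le
  have hint : ∀ i ∈ Finset.range (n + 2), IntervalIntegrable
      (fun τ : ℝ => ((-1:ℝ) ^ (i + (n + 1)) * ((n + 1).choose i : ℝ)) * q k (i : ℝ)
        * t ^ ((i : ℤ) - 1 - (k : ℤ)) * (ψ τ * τ ^ (n + 1 - i)))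
      MeasureTheory.volume 0 t := by
    intro i _
    exact (continuousOn_const.mul
      ((hψ.mono hsub).mul (continuous_pow _).continuousOn)).intervalIntegrable
  have h1 : (∫ τ in (0:ℝ)..t, ψ τ * iteratedDeriv k (fun u => (u - τ) ^ (n + 1) / u) t)
      = ∫ τ in (0:ℝ)..t, ∑ i ∈ Finset.range (n + 2),
          ((-1:ℝ) ^ (i + (n + 1)) * ((n + 1).choose i : ℝ)) * q k (i : ℝ)
            * t ^ ((i : ℤ) - 1 - (k : ℤ)) * (ψ τ * τ ^ (n + 1 - i)) := by
    refine intervalIntegral.integral_congr fun τ _ => ?_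
    rw [iterQ n k τ t ht0, Qf, Finset.mul_sum]
    exact Finset.sum_congr rfl fun i _ => by ring
  rw [h1, intervalIntegral.integral_finset_sum hint, Phi]
  refine Finset.sum_congr rfl fun i _ => ?_
  rw [intervalIntegral.integral_const_mul]
  rfl


end S10

/-- differentiation under the integral sign for `t ↦ ∫₀ᵗ ψ(τ)(t-τ)^{n+1}/t dτ`. -/
theorem stmt10 (ε : ℝ) (hε : 0 < ε) (ψ : ℝ → ℝ)
    (hψ : ContinuousOn ψ (Set.Icc 0 ε)) (n : ℕ) (hn : 0 < n) :
    ∀ k : ℕ, 1 ≤ k → k ≤ n → ∀ t ∈ Set.Ioo (0:ℝ) ε,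
      (∀ j < k, DifferentiableAt ℝ
        (iteratedDeriv j (fun u : ℝ => ∫ τ in (0:ℝ)..u, ψ τ * ((u - τ)^(n+1) / u))) t) ∧
      iteratedDeriv k (fun u : ℝ => ∫ τ in (0:ℝ)..u, ψ τ * ((u - τ)^(n+1) / u)) t
        = ∫ τ in (0:ℝ)..t, ψ τ * iteratedDeriv k (fun u => (u - τ)^(n+1) / u) t := by
  intro k hk1 hk2 t ht
  constructor
  · intro j hj
    have hev : iteratedDeriv j (fun u : ℝ => ∫ τ in (0:ℝ)..u, ψ τ * ((u - τ)^(n+1) / u))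
        =ᶠ[nhds t] S10.Phi ψ n j := by
      filter_upwards [isOpen_Ioo.mem_nhds ht] with u hu using
        S10.iterF hψ n j (by omega) u hu
    rw [hev.differentiableAt_iff]
    exact (S10.hPhid hψ n j (by omega) ht).differentiableAt
  · rw [S10.iterF hψ n k hk2 t ht, S10.rhsInt hψ n k ht]
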